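/- Let R be an associative ring with 1, I a two-sided ideal, n ≥ 3, ε ∈ E_n(R,I) with ε = (ε_{ij}), v = ε·e_1, and w ∈ I^n with w^t v = 0. Write w_1 = ε^t w. Then the first entry of w_1 is 0 and I_n + v·w^t = ε · (I_n + e_1·w_1^t) · ε^{-1} = ∏_{j=2}^n ε · e_{1j}((w_1)_j) · ε^{-1}. -/

import Mathlib

/-- Elementary generators `e_{ij}(x)`, `x ∈ J`, over a (possibly noncommutative)
ring with a two-sided ideal `J`. -/
def elemGens (n : ℕ) (S : Type) [Ring S] (J : TwoSidedIdeal S) :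
    Set (Matrix (Fin n) (Fin n) S)ˣ :=
  {g | ∃ i j : Fin n, i ≠ j ∧ ∃ x ∈ J,
    g.val = 1 + Matrix.single i j x}

/-- The elementary subgroup `E_n(S)`. -/
def En (n : ℕ) (S : Type) [Ring S] : Subgroup (Matrix (Fin n) (Fin n) S)ˣ :=
  Subgroup.closure (elemGens n S ⊤)

/-- The relative elementary subgroup `E_n(S, J)`: the normal closure of `E_n(J)`
in `E_n(S)`. -/
def relEn (n : ℕ) (S : Type) [Ring S] (J : TwoSidedIdeal S) :
    Subgroup (Matrix (Fin n) (Fin n) S)ˣ :=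
  Subgroup.closure
    {h | ∃ ε ∈ En n S, ∃ g ∈ Subgroup.closure (elemGens n S J), h = ε * g * ε⁻¹}

open Matrix

lemma myMulVecMulVec {n : Type*} [Fintype n] {R : Type*} [Ring R]
    (A : Matrix n n R) (b c : n → R) :
    A * vecMulVec b c = vecMulVec (A.mulVec b) c := by
  ext i j
  simp [Matrix.mul_apply, vecMulVec_apply, Matrix.mulVec, dotProduct,
    Finset.sum_mul, mul_assoc]

lemma myVecMulVecMul {n : Type*} [Fintype n] {R : Type*} [Ring R]
    (A : Matrix n n R) (b c : n → R) :
    vecMulVec b c * A = vecMulVec b (Matrix.vecMul c A) := by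
  ext i j
  simp [Matrix.mul_apply, vecMulVec_apply, Matrix.vecMul, dotProduct,
    Finset.mul_sum, mul_assoc]

lemma myConjProd {M : Type*} [Monoid M] (u : Mˣ) {α : Type*} (L : List α) (f : α → M) :
    (L.map fun a => u.val * f a * ↑u⁻¹).prod = u.val * (L.map f).prod * ↑u⁻¹ := by
  induction L with
  | nil => simp
  | cons a t ih =>
      rw [List.map_cons, List.prod_cons, ih, List.map_cons, List.prod_cons]
      simp [mul_assoc, Units.inv_mul_cancel_left]

lemma myProdOneAdd {n : ℕ} {R : Type} [Ring R] (i0 : Fin n) (a : Fin n → R)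
    (L : List (Fin n)) (h : ∀ j ∈ L, j ≠ i0) :
    (L.map fun j => (1 : Matrix (Fin n) (Fin n) R) + Matrix.single i0 j (a j)).prod
      = 1 + (L.map fun j => Matrix.single i0 j (a j)).sum := by
  induction L with
  | nil => simp
  | cons x t ih =>
      have hx : x ≠ i0 := h x (by simp)
      have hz : Matrix.single i0 x (a x) *
          (t.map fun j => Matrix.single i0 j (a j)).sum = 0 := by
        rw [← List.sum_map_mul_left]
        have : ∀ j ∈ t, (fun j => Matrix.single i0 x (a x) *
            Matrix.single i0 j (a j)) j = (0 : Matrix (Fin n) (Fin n) R) := by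
          intro j _
          exact Matrix.single_mul_single_of_ne (i := i0) (j := x) (c := a x) (k := i0) hx (a j)
        rw [List.map_congr_left this]
        simp
      rw [List.map_cons, List.prod_cons, ih (fun j hj => h j (by simp [hj])),
        List.map_cons, List.sum_cons]
      rw [mul_add, mul_one, add_mul, one_mul, hz, add_zero]
      abel

/-- for `ε ∈ E_n(R,I)`, `v = ε e_1`, `w ∈ I^n` with `wᵗv = 0`,
and `w₁ = εᵗ w`, the first entry of `w₁` vanishes and
`I_n + v·wᵗ = ε (I_n + e_1 w₁ᵗ) ε⁻¹ = ∏_{j=2}^n ε e_{1j}((w₁)_j) ε⁻¹`. -/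
theorem conjugation_formula (n : ℕ) (hn : 3 ≤ n) (R : Type) [Ring R]
    (I : TwoSidedIdeal R) (ε : (Matrix (Fin n) (Fin n) R)ˣ)
    (hε : ε ∈ relEn n R I) (v w : Fin n → R)
    (hv : v = ε.val.mulVec (Pi.single (⟨0, by omega⟩ : Fin n) 1))
    (hw : ∀ k, w k ∈ I)
    (hvw : dotProduct w v = 0)
    (w₁ : Fin n → R) (hw₁ : w₁ = Matrix.vecMul w ε.val) :
    w₁ ⟨0, by omega⟩ = 0 ∧
    1 + Matrix.vecMulVec v w =
      ε.val * (1 + Matrix.vecMulVec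
        (Pi.single (⟨0, by omega⟩ : Fin n) 1) w₁) * (ε⁻¹).val ∧
    1 + Matrix.vecMulVec v w =
      (((List.finRange n).drop 1).map fun j =>
        ε.val * (1 + Matrix.single (⟨0, by omega⟩ : Fin n) j (w₁ j)) *
          (ε⁻¹).val).prod := by
  obtain ⟨m, rfl⟩ : ∃ m, n = m + 1 := ⟨n - 1, by omega⟩
  set i0 : Fin (m + 1) := ⟨0, by omega⟩ with hi0
  have hi0' : i0 = 0 := rfl
  have hveq : v = fun i => ε.val i i0 := by
    funext i; rw [hv]; simp [Matrix.mulVec_single]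
  have h1 : w₁ i0 = 0 := by
    rw [hw₁]
    rw [hveq] at hvw
    simpa [Matrix.vecMul, dotProduct] using hvw
  have hB : 1 + Matrix.vecMulVec v w =
      ε.val * (1 + Matrix.vecMulVec (Pi.single i0 1) w₁) * (ε⁻¹).val := by
    rw [mul_add, mul_one, add_mul, ε.mul_inv, myMulVecMulVec, myVecMulVecMul,
      ← hv, hw₁, Matrix.vecMul_vecMul, ε.mul_inv, Matrix.vecMul_one]
  refine ⟨h1, hB, ?_⟩
  have hdrop : (List.finRange (m + 1)).drop 1 = (List.finRange m).map Fin.succ := by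
    rw [List.finRange_succ]; rfl
  rw [hdrop, myConjProd ε ((List.finRange m).map Fin.succ)
      (fun j => 1 + Matrix.single i0 j (w₁ j)),
    myProdOneAdd i0 w₁ _ (by
      intro j hj
      simp only [List.mem_map] at hj
      obtain ⟨k, _, rfl⟩ := hj
      rw [hi0']
      exact Fin.succ_ne_zero k)]
  rw [hB]
  congr 2
  rw [List.map_map]
  have hc : ((fun j => Matrix.single i0 j (w₁ j)) ∘ Fin.succ)
      = fun k : Fin m => Matrix.single i0 k.succ (w₁ k.succ) := rfl
  rw [hc, ← Fin.sum_univ_def (fun k : Fin m => Matrix.single i0 k.succ (w₁ k.succ))]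
  have : ∑ k : Fin m, Matrix.single i0 k.succ (w₁ k.succ)
      = ∑ j : Fin (m+1), Matrix.single i0 j (w₁ j) := by
    rw [Fin.sum_univ_succ (f := fun j => Matrix.single i0 j (w₁ j)), ← hi0', h1,
      Matrix.single_zero, zero_add]
  rw [this]
  ext i j
  simp [Matrix.sum_apply, Matrix.single, Matrix.vecMulVec_apply, Pi.single_apply,
    ite_and, eq_comm]
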